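/- For K ∼ Binomial(n,p), E[exp(n·kl(K/n ‖ p))] = ξ(n), and in particular this expectation is independent of p and at most 2√n. -/

import Mathlib

open Finset

/-- Binary KL divergence `kl(p‖q)` with the usual conventions at the boundary. -/
noncomputable def klBer (p q : ℝ) : ℝ :=
  p * Real.log (p / q) + (1 - p) * Real.log ((1 - p) / (1 - q))

/-- `ξ(n) = Σ_{k=0}^n C(n,k) (k/n)^k (1-k/n)^(n-k)` (with the convention `0⁰ = 1`). -/
noncomputable def xi (n : ℕ) : ℝ :=
  ∑ k ∈ Finset.range (n + 1),
    (n.choose k : ℝ) * ((k : ℝ) / n) ^ k * (1 - (k : ℝ) / n) ^ (n - k)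

open Real

lemma term_eq {n k : ℕ} (hn : 1 ≤ n) (hk : k ≤ n) {p : ℝ} (hp0 : 0 < p) (hp1 : p < 1) :
    p ^ k * (1 - p) ^ (n - k) * Real.exp (n * klBer ((k : ℝ) / n) p)
      = ((k : ℝ) / n) ^ k * (1 - (k : ℝ) / n) ^ (n - k) := by
  have hn0 : (n : ℝ) ≠ 0 := by positivity
  have hp1' : (0:ℝ) < 1 - p := by linarith
  have hcast : ((n - k : ℕ) : ℝ) = (n : ℝ) - k := by
    rw [Nat.cast_sub hk]
  have h1 : (n : ℝ) * klBer ((k : ℝ) / n) p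
      = k * Real.log (((k:ℝ)/n) / p) + ((n - k : ℕ) : ℝ) * Real.log ((1 - (k:ℝ)/n) / (1 - p)) := by
    rw [klBer, hcast]
    field_simp
  have hx : Real.exp ((k:ℝ) * Real.log (((k:ℝ)/n) / p)) = (((k:ℝ)/n) / p) ^ k := by
    rcases Nat.eq_zero_or_pos k with rfl | hk0
    · simp
    · have hxpos : 0 < ((k:ℝ)/n) / p := by positivity
      rw [Real.exp_nat_mul, Real.exp_log hxpos]
  have hy : Real.exp (((n - k : ℕ):ℝ) * Real.log ((1 - (k:ℝ)/n) / (1 - p)))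
      = ((1 - (k:ℝ)/n) / (1 - p)) ^ (n - k) := by
    rcases Nat.eq_zero_or_pos (n - k) with h0 | hk0
    · simp [h0]
    · have hkn : k < n := by omega
      have : (0:ℝ) < 1 - (k:ℝ)/n := by
        rw [sub_pos, div_lt_one (by positivity)]
        exact_mod_cast hkn
      have hypos : 0 < (1 - (k:ℝ)/n) / (1 - p) := by positivity
      rw [Real.exp_nat_mul, Real.exp_log hypos]
  rw [h1, Real.exp_add, hx, hy]
  have e1 : p * (((k:ℝ)/n) / p) = (k:ℝ)/n := by field_simp
  have e2 : (1 - p) * ((1 - (k:ℝ)/n) / (1 - p)) = 1 - (k:ℝ)/n := by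
    rw [mul_div_cancel₀ _ (by linarith : (1:ℝ) - p ≠ 0)]
  calc p ^ k * (1 - p) ^ (n - k) * ((((k:ℝ)/n) / p) ^ k * ((1 - (k:ℝ)/n) / (1 - p)) ^ (n - k))
      = (p * (((k:ℝ)/n) / p)) ^ k * ((1 - p) * ((1 - (k:ℝ)/n) / (1 - p))) ^ (n - k) := by
        rw [mul_pow, mul_pow]; ring
    _ = ((k : ℝ) / n) ^ k * (1 - (k : ℝ) / n) ^ (n - k) := by rw [e1, e2]

lemma stirling_lower {m : ℕ} (hm : 1 ≤ m) : Real.sqrt π ≤ Stirling.stirlingSeq m := by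
  have h : Filter.Tendsto (Stirling.stirlingSeq ∘ Nat.succ) Filter.atTop (nhds (Real.sqrt π)) :=
    Stirling.tendsto_stirlingSeq_sqrt_pi.comp (Filter.tendsto_add_atTop_nat 1)
  have := Stirling.stirlingSeq'_antitone.le_of_tendsto h (m - 1)
  simpa [Nat.succ_eq_add_one, Nat.sub_add_cancel hm] using this

lemma stirling_mono {k m : ℕ} (hk : 1 ≤ k) (hkm : k ≤ m) :
    Stirling.stirlingSeq m ≤ Stirling.stirlingSeq k := by
  have := Stirling.stirlingSeq'_antitone (a := k - 1) (b := m - 1) (by omega)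
  simpa [Function.comp, Nat.succ_eq_add_one, Nat.sub_add_cancel hk,
    Nat.sub_add_cancel (hk.trans hkm)] using this

lemma factorial_eq {m : ℕ} (hm : 1 ≤ m) :
    (Nat.factorial m : ℝ) = Stirling.stirlingSeq m * Real.sqrt (2*m) * ((m:ℝ)/Real.exp 1)^m := by
  have h1 : (0:ℝ) < Real.sqrt (2*m) := by positivity
  have h2 : (0:ℝ) < ((m:ℝ)/Real.exp 1)^m := by positivity
  rw [Stirling.stirlingSeq]
  field_simp

lemma interior_bound {n k : ℕ} (hk1 : 1 ≤ k) (hkn : k < n) :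
    (n.choose k : ℝ) * ((k:ℝ)/n)^k * (((n - k : ℕ):ℝ)/n)^(n-k)
      ≤ (Real.sqrt π * Real.sqrt 2)⁻¹ * (1/Real.sqrt k + 1/Real.sqrt ((n-k : ℕ))) := by
  set b : ℕ := n - k with hb
  have hb1 : 1 ≤ b := by omega
  have hn1 : 1 ≤ n := by omega
  have hkb : k + b = n := by omega
  have hA := Stirling.stirlingSeq'_pos (n - 1)
  have hApos : 0 < Stirling.stirlingSeq n := by
    have : n - 1 + 1 = n := by omega
    rwa [this] at hA
  have hBpos : 0 < Stirling.stirlingSeq k := by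
    have h := Stirling.stirlingSeq'_pos (k - 1); have : k - 1 + 1 = k := by omega
    rwa [this] at h
  have hCpos : 0 < Stirling.stirlingSeq b := by
    have h := Stirling.stirlingSeq'_pos (b - 1); have : b - 1 + 1 = b := by omega
    rwa [this] at h
  set A := Stirling.stirlingSeq n
  set B := Stirling.stirlingSeq k
  set C := Stirling.stirlingSeq b
  have hn0 : (0:ℝ) < n := by exact_mod_cast (by omega : 0 < n)
  have hk0 : (0:ℝ) < k := by exact_mod_cast hk1
  have hb0 : (0:ℝ) < b := by exact_mod_cast hb1
  have he : (0:ℝ) < Real.exp 1 := Real.exp_pos 1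
  have hpow : ((n:ℝ)/Real.exp 1)^n * ((k:ℝ)/(n:ℝ))^k * ((b:ℝ)/(n:ℝ))^b
      = ((k:ℝ)/Real.exp 1)^k * ((b:ℝ)/Real.exp 1)^b := by
    have h1 : (n:ℝ)^n = (n:ℝ)^k * (n:ℝ)^b := by rw [← pow_add, hkb]
    have h2 : (Real.exp 1)^n = (Real.exp 1)^k * (Real.exp 1)^b := by rw [← pow_add, hkb]
    rw [div_pow, div_pow, div_pow, div_pow, div_pow, h1, h2]
    field_simp
  have hX : ((k:ℝ)/(n:ℝ))^k * ((b:ℝ)/(n:ℝ))^b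
      = ((k:ℝ)/Real.exp 1)^k * ((b:ℝ)/Real.exp 1)^b / (((n:ℝ)/Real.exp 1)^n) := by
    rw [eq_div_iff (by positivity : ((n:ℝ)/Real.exp 1)^n ≠ 0)]
    linear_combination hpow
  have key : (n.choose k : ℝ) * ((k:ℝ)/n)^k * ((b:ℝ)/n)^b
      = (A/(B*C)) * (Real.sqrt (2*n) / (Real.sqrt (2*k) * Real.sqrt (2*b))) := by
    have hc : (n.choose k : ℝ) = (Nat.factorial n : ℝ) / (Nat.factorial k * Nat.factorial b) :=
      Nat.cast_choose ℝ hkn.le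
    rw [mul_assoc, hX, hc, factorial_eq hn1, factorial_eq hk1, factorial_eq hb1]
    have s1 : (0:ℝ) < Real.sqrt (2*n) := by positivity
    have s2 : (0:ℝ) < Real.sqrt (2*k) := by positivity
    have s3 : (0:ℝ) < Real.sqrt (2*b) := by positivity
    field_simp
    simp only [A, B, C]
    have hk' : Stirling.stirlingSeq k ≠ 0 := hBpos.ne'
    have hb' : Stirling.stirlingSeq b ≠ 0 := hCpos.ne'
    field_simp
  rw [key]
  have hsqk : (0:ℝ) < Real.sqrt k := by positivity
  have hsqb : (0:ℝ) < Real.sqrt b := by positivity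
  have f1 : A/(B*C) ≤ 1/Real.sqrt π := by
    have h1 : A ≤ B := stirling_mono hk1 hkn.le
    have h2 : Real.sqrt π ≤ C := stirling_lower hb1
    have hπ : (0:ℝ) < Real.sqrt π := by positivity
    rw [div_le_div_iff₀ (by positivity) hπ]
    nlinarith
  have f2 : Real.sqrt (2*n) / (Real.sqrt (2*k) * Real.sqrt (2*b))
      ≤ (Real.sqrt 2)⁻¹ * (1/Real.sqrt k + 1/Real.sqrt b) := by
    have e1 : Real.sqrt (2*(n:ℝ)) = Real.sqrt 2 * Real.sqrt n := Real.sqrt_mul (by norm_num) _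
    have e2 : Real.sqrt (2*(k:ℝ)) = Real.sqrt 2 * Real.sqrt k := Real.sqrt_mul (by norm_num) _
    have e3 : Real.sqrt (2*(b:ℝ)) = Real.sqrt 2 * Real.sqrt b := Real.sqrt_mul (by norm_num) _
    have hsum : Real.sqrt n ≤ Real.sqrt k + Real.sqrt b := by
      have hn' : (n:ℝ) = k + b := by exact_mod_cast hkb.symm
      rw [hn']
      have h1 := Real.sq_sqrt hk0.le
      have h2 := Real.sq_sqrt hb0.le
      have h4 := Real.sq_sqrt (by positivity : (0:ℝ) ≤ (k:ℝ) + b)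
      nlinarith [Real.sqrt_nonneg ((k:ℝ) + b), Real.sqrt_nonneg (k:ℝ), Real.sqrt_nonneg (b:ℝ),
        mul_nonneg (Real.sqrt_nonneg (k:ℝ)) (Real.sqrt_nonneg (b:ℝ))]
    have hs2 : (0:ℝ) < Real.sqrt 2 := by positivity
    rw [e1, e2, e3, div_le_iff₀ (by positivity)]
    have expand : (Real.sqrt 2)⁻¹ * (1/Real.sqrt k + 1/Real.sqrt b)
        * (Real.sqrt 2 * Real.sqrt k * (Real.sqrt 2 * Real.sqrt b))
        = Real.sqrt 2 * (Real.sqrt k + Real.sqrt b) := by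
      field_simp
      ring
    calc Real.sqrt 2 * Real.sqrt n ≤ Real.sqrt 2 * (Real.sqrt k + Real.sqrt b) := by
          exact mul_le_mul_of_nonneg_left hsum hs2.le
      _ = _ := expand.symm
  have h1 : (0:ℝ) ≤ Real.sqrt (2*n) / (Real.sqrt (2*k) * Real.sqrt (2*b)) := by positivity
  have h2 : (0:ℝ) ≤ 1/Real.sqrt π := by positivity
  calc A/(B*C) * (Real.sqrt (2*n) / (Real.sqrt (2*k) * Real.sqrt (2*b)))
      ≤ (1/Real.sqrt π) * ((Real.sqrt 2)⁻¹ * (1/Real.sqrt k + 1/Real.sqrt b)) := by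
        apply mul_le_mul f1 f2 h1 h2
    _ = (Real.sqrt π * Real.sqrt 2)⁻¹ * (1/Real.sqrt k + 1/Real.sqrt b) := by
        rw [mul_inv]; ring

lemma sum_inv_sqrt {m : ℕ} (hm : 1 ≤ m) :
    ∑ i ∈ Finset.range m, 1 / Real.sqrt ((i+1 : ℕ)) ≤ 2 * Real.sqrt m - 1 := by
  induction m, hm using Nat.le_induction with
  | base => norm_num
  | succ m hm ih =>
    rw [Finset.sum_range_succ]
    have h1 : 1 / Real.sqrt ((m+1 : ℕ)) ≤ 2 * Real.sqrt (m+1) - 2 * Real.sqrt m := by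
      have hs1 : (0:ℝ) < Real.sqrt ((m:ℝ)+1) := by positivity
      have hs0 : (0:ℝ) ≤ Real.sqrt m := Real.sqrt_nonneg _
      have hmono : Real.sqrt (m:ℝ) ≤ Real.sqrt ((m:ℝ)+1) := by
        apply Real.sqrt_le_sqrt; linarith
      have hsq1 := Real.sq_sqrt (by positivity : (0:ℝ) ≤ (m:ℝ)+1)
      have hsq0 := Real.sq_sqrt (by positivity : (0:ℝ) ≤ (m:ℝ))
      rw [div_le_iff₀ (by push_cast; positivity)]
      push_cast
      nlinarith
    push_cast at *
    linarith

lemma le_two_sqrt {r x : ℝ} (hr : 0 ≤ r) (hx : 0 ≤ x) (h : r^2 ≤ 4*x) : r ≤ 2*Real.sqrt x := by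
  have h2 : r/2 ≤ Real.sqrt x := (Real.le_sqrt (by linarith) hx).mpr (by nlinarith)
  linarith

lemma xi_le (n : ℕ) (hn : 1 ≤ n) : xi n ≤ 2 * Real.sqrt n := by
  rcases lt_or_ge n 9 with hsmall | hbig
  · interval_cases n <;>
      exact le_two_sqrt (by norm_num [xi, Finset.sum_range_succ, Nat.choose])
        (by positivity) (by norm_num [xi, Finset.sum_range_succ, Nat.choose])
  · obtain ⟨m, rfl⟩ : ∃ m, n = m + 1 := ⟨n - 1, by omega⟩
    have hm8 : 8 ≤ m := by omega
    have hm1 : 1 ≤ m := by omega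
    set c : ℝ := (Real.sqrt π * Real.sqrt 2)⁻¹ with hcdef
    have hπpos : (0:ℝ) < Real.sqrt π * Real.sqrt 2 := by positivity
    have hc0 : 0 ≤ c := by positivity
    have h25 : (5/2 : ℝ) ≤ Real.sqrt π * Real.sqrt 2 := by
      rw [← Real.sqrt_mul Real.pi_pos.le]
      apply (Real.le_sqrt (by norm_num) (by positivity)).mpr
      nlinarith [Real.pi_gt_d6]
    have hc4 : c ≤ 2/5 := by
      rw [hcdef]
      calc (Real.sqrt π * Real.sqrt 2)⁻¹ ≤ (5/2 : ℝ)⁻¹ := by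
            apply inv_anti₀ (by norm_num) h25
        _ = 2/5 := by norm_num
    -- split the sum
    rw [xi, Finset.sum_range_succ', Finset.sum_range_succ]
    have hf0 : ((m+1).choose 0 : ℝ) * (((0:ℕ) : ℝ) / ((m+1:ℕ):ℝ)) ^ (0:ℕ)
        * (1 - ((0:ℕ) : ℝ) / ((m+1:ℕ):ℝ)) ^ (m+1-0) = 1 := by
      simp
    have hfn : ((m+1).choose (m+1) : ℝ) * (((m+1:ℕ) : ℝ) / ((m+1:ℕ))) ^ (m+1)
        * (1 - ((m+1:ℕ) : ℝ) / ((m+1:ℕ))) ^ (m+1-(m+1)) = 1 := by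
      have h0 : ((m:ℝ)+1) ≠ 0 := by positivity
      push_cast
      simp [div_self h0]
    rw [hfn, hf0]
    have hterm : ∀ i ∈ Finset.range m,
        (((m+1).choose (i+1) : ℝ) * (((i+1:ℕ):ℝ)/((m+1:ℕ):ℝ))^(i+1)
          * (1 - ((i+1:ℕ):ℝ)/((m+1:ℕ):ℝ))^(m+1-(i+1)))
        ≤ c * (1/Real.sqrt ((i+1:ℕ)) + 1/Real.sqrt ((m+1-(i+1):ℕ))) := by
      intro i hi
      have him : i < m := Finset.mem_range.mp hi
      have h := interior_bound (n := m+1) (k := i+1) (by omega) (by omega)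
      have e2 : (1 - ((i+1:ℕ):ℝ)/((m+1:ℕ):ℝ)) = ((m+1-(i+1):ℕ):ℝ)/((m+1:ℕ):ℝ) := by
        rw [Nat.cast_sub (by omega : i+1 ≤ m+1)]
        push_cast
        have h0 : ((m:ℝ)+1) ≠ 0 := by positivity
        field_simp
      rw [e2]
      exact h
    have hreflect : (∑ i ∈ Finset.range m, 1/Real.sqrt ((m+1-(i+1):ℕ)))
        = ∑ i ∈ Finset.range m, 1/Real.sqrt ((i+1:ℕ)) := by
      rw [← Finset.sum_range_reflect (fun i => 1/Real.sqrt ((i+1:ℕ))) m]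
      apply Finset.sum_congr rfl
      intro i hi
      have him : i < m := Finset.mem_range.mp hi
      have : m - 1 - i + 1 = m + 1 - (i+1) := by omega
      rw [this]
    have hS : (∑ i ∈ Finset.range m, 1/Real.sqrt ((i+1:ℕ)))
        ≤ 2 * Real.sqrt ((m+1:ℕ)) - 1 := by
      refine (sum_inv_sqrt hm1).trans ?_
      have : Real.sqrt (m:ℝ) ≤ Real.sqrt ((m+1:ℕ):ℝ) := by
        apply Real.sqrt_le_sqrt; push_cast; linarith
      linarith
    have hint : (∑ i ∈ Finset.range m, (((m+1).choose (i+1) : ℝ)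
          * (((i+1:ℕ):ℝ)/((m+1:ℕ):ℝ))^(i+1)
          * (1 - ((i+1:ℕ):ℝ)/((m+1:ℕ):ℝ))^(m+1-(i+1))))
        ≤ c * (2 * (2 * Real.sqrt ((m+1:ℕ)) - 1)) := by
      calc (∑ i ∈ Finset.range m, (((m+1).choose (i+1) : ℝ)
          * (((i+1:ℕ):ℝ)/((m+1:ℕ):ℝ))^(i+1)
          * (1 - ((i+1:ℕ):ℝ)/((m+1:ℕ):ℝ))^(m+1-(i+1))))
          ≤ ∑ i ∈ Finset.range m, c * (1/Real.sqrt ((i+1:ℕ)) + 1/Real.sqrt ((m+1-(i+1):ℕ))) :=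
            Finset.sum_le_sum hterm
        _ = c * ((∑ i ∈ Finset.range m, 1/Real.sqrt ((i+1:ℕ)))
              + ∑ i ∈ Finset.range m, 1/Real.sqrt ((m+1-(i+1):ℕ))) := by
            rw [← Finset.mul_sum, Finset.sum_add_distrib]
        _ = c * (2 * ∑ i ∈ Finset.range m, 1/Real.sqrt ((i+1:ℕ))) := by
            rw [hreflect]; ring
        _ ≤ c * (2 * (2 * Real.sqrt ((m+1:ℕ)) - 1)) := by
            apply mul_le_mul_of_nonneg_left _ hc0
            linarith
    have ht3 : (3:ℝ) ≤ Real.sqrt ((m+1:ℕ)) := by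
      apply (Real.le_sqrt (by norm_num) (by positivity)).mpr
      have h8 : (8:ℝ) ≤ (m:ℝ) := by exact_mod_cast hm8
      push_cast
      nlinarith [h8]
    have hkey : (0:ℝ) ≤ 2 - 4*c := by linarith
    nlinarith [mul_nonneg hkey (by linarith : (0:ℝ) ≤ Real.sqrt ((m+1:ℕ)) - 3), hint]

/-- For `K ∼ Binomial(n,p)`, `E[exp(n·kl(K/n ‖ p))] = ξ(n)`; in particular this
expectation is independent of `p` and at most `2√n`. -/
theorem binomial_exp_kl_eq_xi (n : ℕ) (hn : 1 ≤ n) (p : ℝ)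
    (hp0 : 0 < p) (hp1 : p < 1) :
    (∑ k ∈ Finset.range (n + 1),
        (n.choose k : ℝ) * p ^ k * (1 - p) ^ (n - k) *
          Real.exp (n * klBer ((k : ℝ) / n) p)) = xi n ∧
    (∑ k ∈ Finset.range (n + 1),
        (n.choose k : ℝ) * p ^ k * (1 - p) ^ (n - k) *
          Real.exp (n * klBer ((k : ℝ) / n) p)) ≤ 2 * Real.sqrt n := by
  have heq : (∑ k ∈ Finset.range (n + 1),
        (n.choose k : ℝ) * p ^ k * (1 - p) ^ (n - k) *
          Real.exp (n * klBer ((k : ℝ) / n) p)) = xi n := by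
    rw [xi]
    apply Finset.sum_congr rfl
    intro k hk
    have hk' : k ≤ n := by
      have := Finset.mem_range.mp hk; omega
    have ht := term_eq hn hk' hp0 hp1
    calc (n.choose k : ℝ) * p ^ k * (1 - p) ^ (n - k) * Real.exp (n * klBer ((k : ℝ) / n) p)
        = (n.choose k : ℝ) * (p ^ k * (1 - p) ^ (n - k) * Real.exp (n * klBer ((k : ℝ) / n) p)) := by
          ring
      _ = (n.choose k : ℝ) * (((k : ℝ) / n) ^ k * (1 - (k : ℝ) / n) ^ (n - k)) := by rw [ht]
      _ = (n.choose k : ℝ) * ((k : ℝ) / n) ^ k * (1 - (k : ℝ) / n) ^ (n - k) := by ring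
  exact ⟨heq, heq ▸ xi_le n hn⟩
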